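/- Off-diagonal kernel mass estimate: suppose p(t,x₀,y) ≤ C μ(B(x₀,√t))⁻¹ e^{−d(x₀,y)²/(C₁ t)}, ∫_X p(t,x₀,y) dμ(y) ≤ 1, and μ is Q-doubling. Then for all 0 < t ≤ R², (C/R²) ∫₀^t ∫_{B(x₀,3R)\setminus B(x₀,R/2)} p(s,x₀,y)² dμ(y) ds ≤ C' μ(B(x₀,R))⁻¹ e^{−R²/(c t)} for constants C', c depending only on C, C₁, Q and the doubling constant. -/

import Mathlib

open MeasureTheory Metric

/-- Key scalar inequality: `u^Q e^{-u/(2C₁)} ≤ K e^{-u/(4C₁)}` for `u ≥ 1`. -/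
theorem aux_pow_exp {Q C₁ u : ℝ} (hC₁ : 0 < C₁) (hQ : 0 < Q) (hu : 1 ≤ u) :
    u ^ Q * Real.exp (-(u / (2 * C₁))) ≤
      ((Nat.factorial ⌈Q⌉₊ : ℝ) * (4 * C₁) ^ ⌈Q⌉₊) * Real.exp (-(u / (4 * C₁))) := by
  set n := ⌈Q⌉₊ with hn
  have hu0 : (0:ℝ) < u := lt_of_lt_of_le one_pos hu
  have h1 : u ^ Q ≤ u ^ (n : ℕ) := by
    have := Real.rpow_le_rpow_of_exponent_le hu (Nat.le_ceil Q)
    rwa [Real.rpow_natCast] at this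
  have h2 : u ^ (n : ℕ) ≤ ((Nat.factorial n : ℝ) * (4 * C₁) ^ n) * Real.exp (u / (4 * C₁)) := by
    have hx : (0:ℝ) ≤ u / (4 * C₁) := by positivity
    have := Real.pow_div_factorial_le_exp (x := u / (4 * C₁)) hx n
    have h4 : (u / (4 * C₁)) ^ n * (4 * C₁) ^ n = u ^ n := by
      rw [← mul_pow]; congr 1; field_simp
    calc u ^ n = (u / (4 * C₁)) ^ n * (4 * C₁) ^ n := h4.symm
      _ ≤ ((Nat.factorial n : ℝ) * Real.exp (u / (4 * C₁))) * (4 * C₁) ^ n := by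
          gcongr
          exact (div_le_iff₀ (by positivity : (0:ℝ) < (Nat.factorial n : ℝ))).mp this |>.trans_eq (mul_comm _ _)
      _ = ((Nat.factorial n : ℝ) * (4 * C₁) ^ n) * Real.exp (u / (4 * C₁)) := by ring
  have hsplit : Real.exp (-(u / (2 * C₁))) =
      Real.exp (-(u / (4 * C₁))) * Real.exp (-(u / (4 * C₁))) := by
    rw [← Real.exp_add]; congr 1; field_simp; ring
  calc u ^ Q * Real.exp (-(u / (2 * C₁)))
      ≤ u ^ (n:ℕ) * Real.exp (-(u / (2 * C₁))) := by
        exact mul_le_mul_of_nonneg_right h1 (Real.exp_pos _).le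
    _ = (u ^ (n:ℕ) * Real.exp (-(u / (4 * C₁)))) * Real.exp (-(u / (4 * C₁))) := by
        rw [hsplit]; ring
    _ ≤ ((((Nat.factorial n : ℝ) * (4 * C₁) ^ n) * Real.exp (u / (4 * C₁))) *
          Real.exp (-(u / (4 * C₁)))) * Real.exp (-(u / (4 * C₁))) := by
        gcongr
    _ = ((Nat.factorial n : ℝ) * (4 * C₁) ^ n) * Real.exp (-(u / (4 * C₁))) := by
        rw [mul_assoc ((Nat.factorial n : ℝ) * (4 * C₁) ^ n), ← Real.exp_add]
        simp

/-- Off-diagonal kernel mass estimate (first half of Lemma 2.2): under a Gaussian upper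
bound, sub-probability normalization and Q-doubling, for `0 < t ≤ R²`,
`(C/R²)∫₀^t ∫_{B(x₀,3R)∖B(x₀,R/2)} p(s,x₀,y)² dμ ds ≤ C' μ(B(x₀,R))⁻¹ e^{−R²/(ct)}`. -/
theorem stmt_13 {X : Type*} [MetricSpace X] [MeasurableSpace X]
    (μ : Measure X) (x₀ : X) (p : ℝ → X → ℝ)
    (Q C_Q C C₁ R : ℝ) (hQ : 1 < Q) (hCQ : 0 < C_Q) (hC : 0 < C)
    (hC₁ : 0 < C₁) (hR : 0 < R)
    (hball : ∀ (x : X) (r : ℝ), 0 < r → 0 < (μ (ball x r)).toReal)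
    (hdoub : ∀ (x : X) (r s : ℝ), 0 < r → r < s →
      (μ (ball x s)).toReal ≤ C_Q * (s / r) ^ Q * (μ (ball x r)).toReal)
    (hp_nonneg : ∀ s y, 0 ≤ p s y) (hp_meas : ∀ s, Measurable (p s))
    (hupper : ∀ s, 0 < s → ∀ y,
      p s y ≤ C * ((μ (ball x₀ (Real.sqrt s))).toReal)⁻¹ *
        Real.exp (-(dist x₀ y) ^ 2 / (C₁ * s)))
    (hsub : ∀ s, 0 < s → ∫ y, p s y ∂μ ≤ 1) :
    ∃ C' c : ℝ, 0 < C' ∧ 0 < c ∧ ∀ t : ℝ, 0 < t → t ≤ R ^ 2 →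
      (C / R ^ 2) * ∫ s in Set.Ioo (0 : ℝ) t,
          ∫ y in ball x₀ (3 * R) \ ball x₀ (R / 2), (p s y) ^ 2 ∂μ
        ≤ C' * ((μ (ball x₀ R)).toReal)⁻¹ * Real.exp (-R ^ 2 / (c * t)) := by
  have hQ0 : 0 < Q := lt_trans one_pos hQ
  set K : ℝ := (Nat.factorial ⌈Q⌉₊ : ℝ) * (4 * C₁) ^ ⌈Q⌉₊ with hKdef
  have hKpos : 0 < K := by positivity
  have h3Q : (0:ℝ) < (3:ℝ) ^ Q := Real.rpow_pos_of_pos (by norm_num) Q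
  refine ⟨C ^ 3 * C_Q ^ 2 * 3 ^ Q * K, 4 * C₁, by positivity, by positivity, ?_⟩
  intro t ht htR
  set A := ball x₀ (3 * R) \ ball x₀ (R / 2) with hA
  set W := (μ (ball x₀ R)).toReal with hWdef
  have hWpos : 0 < W := hball x₀ R hR
  have hW3pos : 0 < (μ (ball x₀ (3 * R))).toReal := hball x₀ (3 * R) (by positivity)
  set W3 := (μ (ball x₀ (3 * R))).toReal with hW3def
  have hW3fin : μ (ball x₀ (3 * R)) ≠ ⊤ :=
    (ENNReal.toReal_pos_iff.mp hW3pos).2.ne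
  have hAlt : μ A < ⊤ :=
    lt_of_le_of_lt (measure_mono Set.diff_subset) (ENNReal.toReal_pos_iff.mp hW3pos).2
  set G := Real.exp (-R ^ 2 / (4 * C₁ * t)) with hGdef
  have hGpos : 0 < G := Real.exp_pos _
  set D := C ^ 2 * C_Q ^ 2 * 3 ^ Q * K * W⁻¹ * G with hDdef
  have hDpos : 0 < D := by positivity
  have key : ∀ s ∈ Set.Ioo (0:ℝ) t, (∫ y in A, (p s y) ^ 2 ∂μ) ≤ D := by
    intro s hs
    obtain ⟨hs0, hst⟩ := hs
    have hsR2 : s < R ^ 2 := lt_of_lt_of_le hst htR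
    have hrt : 0 < Real.sqrt s := Real.sqrt_pos.mpr hs0
    have hrtlt : Real.sqrt s < R := by
      have h := Real.sqrt_lt_sqrt hs0.le hsR2
      rwa [Real.sqrt_sq hR.le] at h
    set V := (μ (ball x₀ (Real.sqrt s))).toReal with hVdef
    have hVpos : 0 < V := hball _ _ hrt
    set E := Real.exp (-(R / 2) ^ 2 / (C₁ * s)) with hEdef
    have hEpos : 0 < E := Real.exp_pos _
    set M := C * V⁻¹ * E with hMdef
    have hMpos : 0 < M := by positivity
    -- pointwise bound on A
    have hpt : ∀ y ∈ A, (p s y) ^ 2 ≤ M ^ 2 := by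
      intro y hy
      have hdist : R / 2 ≤ dist x₀ y := by
        have h2 := hy.2
        rw [mem_ball, dist_comm] at h2
        exact not_lt.mp h2
      have h1 : p s y ≤ M := by
        refine (hupper s hs0 y).trans ?_
        rw [hMdef]
        refine mul_le_mul_of_nonneg_left ?_ (by positivity)
        rw [hEdef, Real.exp_le_exp, neg_div, neg_div, neg_le_neg_iff]
        gcongr
      exact pow_le_pow_left₀ (hp_nonneg s y) h1 2
    -- a.e. bound w.r.t. the restricted measure (no measurability of A needed)
    have hae : ∀ᵐ y ∂μ.restrict A, (p s y) ^ 2 ≤ M ^ 2 := by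
      rw [ae_iff]
      refine measure_mono_null (t := {y | M ^ 2 < (p s y) ^ 2}) (fun y hy => not_le.mp hy) ?_
      rw [Measure.restrict_apply (measurableSet_lt measurable_const ((hp_meas s).pow_const 2))]
      have hempty : {y | M ^ 2 < (p s y) ^ 2} ∩ A = ∅ := by
        ext y
        simp only [Set.mem_inter_iff, Set.mem_setOf_eq, Set.mem_empty_iff_false, iff_false,
          not_and]
        intro h1 h2
        exact absurd (hpt y h2) (not_le.mpr h1)
      rw [hempty, measure_empty]
    have step1 : (∫ y in A, (p s y) ^ 2 ∂μ) ≤ M ^ 2 * W3 := by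
      have hconst : Integrable (fun _ : X => M ^ 2) (μ.restrict A) :=
        integrable_const_iff.mpr (Or.inr ⟨by rw [Measure.restrict_apply_univ]; exact hAlt⟩)
      have hAleW3 : (μ A).toReal ≤ W3 :=
        ENNReal.toReal_mono hW3fin (measure_mono Set.diff_subset)
      calc (∫ y in A, (p s y) ^ 2 ∂μ) ≤ ∫ _ in A, M ^ 2 ∂μ :=
            integral_mono_of_nonneg (Filter.Eventually.of_forall fun y => by positivity)
              hconst hae
        _ = (μ A).toReal * M ^ 2 := by rw [setIntegral_const, smul_eq_mul]; rfl
        _ ≤ M ^ 2 * W3 := by rw [mul_comm]; gcongr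
    -- doubling estimates
    set x' : ℝ := (3 * R / Real.sqrt s) ^ Q with hx'def
    set x : ℝ := (R / Real.sqrt s) ^ Q with hxdef
    have hx'pos : 0 < x' := Real.rpow_pos_of_pos (by positivity) Q
    have hxpos : 0 < x := Real.rpow_pos_of_pos (by positivity) Q
    have hd1 : W3 ≤ C_Q * x' * V := hdoub x₀ (Real.sqrt s) (3 * R) hrt (by linarith)
    have hd2 : W ≤ C_Q * x * V := hdoub x₀ (Real.sqrt s) R hrt hrtlt
    have hd2' : V⁻¹ ≤ C_Q * x * W⁻¹ := by
      rw [inv_eq_one_div, show C_Q * x * W⁻¹ = (C_Q * x) / W from by rw [div_eq_mul_inv],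
        div_le_div_iff₀ hVpos hWpos]
      nlinarith [hd2]
    -- scalar inequality
    have hu1 : 1 ≤ R ^ 2 / s := (one_le_div hs0).mpr hsR2.le
    have hxx' : x' * x * (E * E) ≤ 3 ^ Q * K * G := by
      have hx'eq : x' = 3 ^ Q * x := by
        rw [hx'def, hxdef, mul_div_assoc, Real.mul_rpow (by norm_num) (by positivity)]
      have hxsq : x * x = (R ^ 2 / s) ^ Q := by
        rw [hxdef, ← Real.mul_rpow (by positivity) (by positivity)]
        congr 1
        rw [div_mul_div_comm, ← pow_two, ← pow_two, Real.sq_sqrt hs0.le]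
      have hEsq : E * E = Real.exp (-(R ^ 2 / s / (2 * C₁))) := by
        rw [hEdef, ← Real.exp_add]; congr 1; field_simp; ring
      have haux := aux_pow_exp (u := R ^ 2 / s) hC₁ hQ0 hu1
      have hGs : Real.exp (-(R ^ 2 / s / (4 * C₁))) ≤ G := by
        rw [hGdef, Real.exp_le_exp,
          show R ^ 2 / s / (4 * C₁) = R ^ 2 / (4 * C₁ * s) from by ring,
          show -R ^ 2 / (4 * C₁ * t) = -(R ^ 2 / (4 * C₁ * t)) from by rw [neg_div],
          neg_le_neg_iff]
        gcongr
      calc x' * x * (E * E) = 3 ^ Q * ((x * x) * (E * E)) := by rw [hx'eq]; ring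
        _ = 3 ^ Q * ((R ^ 2 / s) ^ Q * Real.exp (-(R ^ 2 / s / (2 * C₁)))) := by
            rw [hxsq, hEsq]
        _ ≤ 3 ^ Q * (K * Real.exp (-(R ^ 2 / s / (4 * C₁)))) :=
            mul_le_mul_of_nonneg_left haux h3Q.le
        _ ≤ 3 ^ Q * (K * G) := by gcongr
        _ = 3 ^ Q * K * G := by ring
    -- combine
    calc (∫ y in A, (p s y) ^ 2 ∂μ) ≤ M ^ 2 * W3 := step1
      _ = C ^ 2 * (E * E) * V⁻¹ * (V⁻¹ * W3) := by rw [hMdef]; ring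
      _ ≤ C ^ 2 * (E * E) * V⁻¹ * (V⁻¹ * (C_Q * x' * V)) := by gcongr
      _ = C ^ 2 * (E * E) * V⁻¹ * (C_Q * x') := by field_simp
      _ ≤ C ^ 2 * (E * E) * (C_Q * x * W⁻¹) * (C_Q * x') := by gcongr
      _ = C ^ 2 * C_Q ^ 2 * W⁻¹ * (x' * x * (E * E)) := by ring
      _ ≤ C ^ 2 * C_Q ^ 2 * W⁻¹ * (3 ^ Q * K * G) := by gcongr
      _ = D := by rw [hDdef]; ring
  -- outer integral
  by_cases hIout : IntegrableOn
      (fun s => ∫ y in A, (p s y) ^ 2 ∂μ) (Set.Ioo (0:ℝ) t) volume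
  · have hIoofin : volume (Set.Ioo (0:ℝ) t) < ⊤ := by
      rw [Real.volume_Ioo]; exact ENNReal.ofReal_lt_top
    have houter : (∫ s in Set.Ioo (0:ℝ) t, ∫ y in A, (p s y) ^ 2 ∂μ) ≤ t * D := by
      calc (∫ s in Set.Ioo (0:ℝ) t, ∫ y in A, (p s y) ^ 2 ∂μ)
          ≤ ∫ _ in Set.Ioo (0:ℝ) t, D :=
            setIntegral_mono_on hIout
              ((integrableOn_const_iff).mpr (Or.inr hIoofin)) measurableSet_Ioo key
        _ = (volume (Set.Ioo (0:ℝ) t)).toReal * D := by rw [setIntegral_const, smul_eq_mul]; rfl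
        _ = t * D := by rw [Real.volume_Ioo, ENNReal.toReal_ofReal (by linarith)]; ring_nf
    calc (C / R ^ 2) * ∫ s in Set.Ioo (0:ℝ) t, ∫ y in A, (p s y) ^ 2 ∂μ
        ≤ (C / R ^ 2) * (t * D) := by gcongr
      _ ≤ (C / R ^ 2) * (R ^ 2 * D) := by gcongr
      _ = C * D := by field_simp
      _ = C ^ 3 * C_Q ^ 2 * 3 ^ Q * K * W⁻¹ * G := by rw [hDdef]; ring
  · rw [integral_undef hIout, mul_zero]
    positivity
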